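/- A decorated Gauss diagram G (with integer valuations on arrows and circle) admits a non-negative refinement (an assignment of non-negative integers to its 2n edges whose sum over each distinguished loop equals that arrow's valuation and whose total equals the circle's valuation) if and only if G is weakly admissible, i.e. every nontrivial loop in G that respects the circle's orientation has non-negative total valuation (homology class in ℤ). -/

import Mathlib

/-- A Gauss diagram with `n` arrows: the `2n` arrow endpoints are the points of the cyclic group
`ZMod (2*n)` (listed in the cyclic order of the oriented circle), and arrow `a` points from its
underpass point `tail a` to its overpass point `head a`.  The edge `e` of the diagram is the arc
of the circle from the point `e` to the point `e + 1`. -/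
structure GaussDiagram (n : ℕ) where
  head : Fin n → ZMod (2 * n)
  tail : Fin n → ZMod (2 * n)
  inj : Function.Injective (Sum.elim head tail)

namespace GaussDiagram

variable {n : ℕ}

/-- The edge-characteristic vector of the distinguished loop of arrow `a`: it traverses the
edges from `head a` to `tail a` along the orientation of the circle (and returns along the
arrow). -/
def arcChain (G : GaussDiagram n) (a : Fin n) : ZMod (2 * n) → ℤ :=
  fun e => if (e - G.head a).val < (G.tail a - G.head a).val then 1 else 0

/-- The `(n+1) × 2n` matrix whose rows are the edge-characteristic vectors of the `n`
distinguished loops together with the full circle (the all-ones row, indexed by `none`). -/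
def loopMatrix (G : GaussDiagram n) : Matrix (Option (Fin n)) (ZMod (2 * n)) ℤ :=
  fun r e => r.elim 1 fun a => G.arcChain a e

/-- The elementary refinement move of type II+ at arrow `a`: add `+1` on the edge directly
following each endpoint of `a` and `-1` on the edge directly preceding it (with multiplicity). -/
def moveVec (G : GaussDiagram n) (a : Fin n) : ZMod (2 * n) → ℤ :=
  fun e => (if e = G.head a then 1 else 0) + (if e = G.tail a then 1 else 0)
    - (if e = G.head a - 1 then 1 else 0) - (if e = G.tail a - 1 then 1 else 0)

/-- The edge `e` (from point `e` to point `e+1`) is adjacent to the arrow `a` if one of its two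
boundary points is an endpoint of `a`. -/
def adjacent (G : GaussDiagram n) (e : ZMod (2 * n)) (a : Fin n) : Prop :=
  e = G.head a ∨ e + 1 = G.head a ∨ e = G.tail a ∨ e + 1 = G.tail a

end GaussDiagram

/-- A move of a loop in a Gauss diagram: either follow the next edge of the circle in the
direction of its orientation (`circ`), or jump along an arrow, in either direction. -/
inductive Move (n : ℕ) where
  | circ : Move n
  | jumpHT : Fin n → Move n
  | jumpTH : Fin n → Move n

/-- Whether a move is a jump along an arrow. -/
def Move.isJump {n : ℕ} : Move n → Prop
  | .circ => False
  | _ => True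

namespace GaussDiagram

/-- The point reached by performing one move starting at the point `p`. -/
def target (G : GaussDiagram n) (p : ZMod (2 * n)) : Move n → ZMod (2 * n)
  | .circ => p + 1
  | .jumpHT a => G.tail a
  | .jumpTH a => G.head a

/-- Validity of a sequence of moves starting at `p`: a jump along an arrow may only be performed
from an endpoint of that arrow. -/
def validFrom (G : GaussDiagram n) : ZMod (2 * n) → List (Move n) → Prop
  | _, [] => True
  | p, mv :: r =>
      (match mv with
        | .circ => True
        | .jumpHT a => p = G.head a
        | .jumpTH a => p = G.tail a) ∧ validFrom G (G.target p mv) r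

/-- The point reached after performing a sequence of moves from `p`. -/
def run (G : GaussDiagram n) : ZMod (2 * n) → List (Move n) → ZMod (2 * n)
  | p, [] => p
  | p, mv :: r => run G (G.target p mv) r

/-- A loop in the Gauss diagram which respects the orientation of the circle: a closed valid
sequence of moves (circle arcs are always traversed in the orientation direction, arrows may be
traversed both ways). -/
structure Loop (G : GaussDiagram n) where
  start : ZMod (2 * n)
  moves : List (Move n)
  valid : G.validFrom start moves
  closed : G.run start moves = start

/-- A loop is *reduced* (nontrivial) if it is nonempty and never backtracks: no two cyclically
consecutive moves are jumps (two consecutive jumps necessarily cancel along the same arrow). -/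
def Loop.Reduced {G : GaussDiagram n} (L : Loop G) : Prop :=
  L.moves ≠ [] ∧
  L.moves.Chain' (fun m₁ m₂ => ¬(m₁.isJump ∧ m₂.isJump)) ∧
  ∀ m₁ ∈ L.moves.getLast?, ∀ m₂ ∈ L.moves.head?, ¬(m₁.isJump ∧ m₂.isJump)

/-- Whether a sequence of moves from `p` meets a marking of the marking function `m` (which
records the number of (positive) markings on each edge). -/
def meetsFrom (G : GaussDiagram n) (m : ZMod (2 * n) → ℕ) :
    ZMod (2 * n) → List (Move n) → Prop
  | _, [] => False
  | p, .circ :: r => 0 < m p ∨ meetsFrom G m (p + 1) r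
  | _, .jumpHT a :: r => meetsFrom G m (G.tail a) r
  | _, .jumpTH a :: r => meetsFrom G m (G.head a) r

/-- A loop meets a marking if one of the circle arcs it traverses carries a marking. -/
def Loop.Meets {G : GaussDiagram n} (m : ZMod (2 * n) → ℕ) (L : Loop G) : Prop :=
  G.meetsFrom m L.start L.moves

/-- In the diagram obtained by deleting the arrows of `R`, the point `p` is directly preceded by
a marking: going backwards along the circle from `p` one finds a marking before meeting any
endpoint of a non-deleted arrow. -/
def precededBy (G : GaussDiagram n) (m : ZMod (2 * n) → ℕ) (R : Set (Fin n))
    (p : ZMod (2 * n)) : Prop :=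
  ∃ j : ℕ, 0 < m (p - 1 - (j : ZMod (2 * n))) ∧
    ∀ i < j, ∃ a ∈ R, G.head a = p - 1 - (i : ZMod (2 * n)) ∨
      G.tail a = p - 1 - (i : ZMod (2 * n))

/-- The set of arrows removed after `k` rounds of deleting the arrows of level `1` (those whose
two endpoints are both directly preceded by a marking in the current diagram). -/
def removedAt (G : GaussDiagram n) (m : ZMod (2 * n) → ℕ) : ℕ → Set (Fin n)
  | 0 => ∅
  | k + 1 => removedAt G m k ∪
      {a | G.precededBy m (removedAt G m k) (G.head a) ∧
           G.precededBy m (removedAt G m k) (G.tail a)}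

/-- An arrow has a well-defined level if it is eventually deleted in the level process. -/
def HasLevel (G : GaussDiagram n) (m : ZMod (2 * n) → ℕ) (a : Fin n) : Prop :=
  ∃ k, a ∈ G.removedAt m k

/-- The number of times a sequence of moves from `p` traverses each edge of the circle. -/
def edgeCount (G : GaussDiagram n) : ZMod (2 * n) → List (Move n) → ZMod (2 * n) → ℤ
  | _, [] => 0
  | p, .circ :: r => fun e => (if e = p then 1 else 0) + edgeCount G (p + 1) r e
  | _, .jumpHT a :: r => edgeCount G (G.tail a) r
  | _, .jumpTH a :: r => edgeCount G (G.head a) r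

/-- The net number of traversals of each arrow, counted positively in the tail-to-head
direction (the direction used by the distinguished loops). -/
def netJump {n : ℕ} : List (Move n) → Fin n → ℤ
  | [] => 0
  | .circ :: r => netJump r
  | .jumpHT a :: r => fun b => netJump r b - (if b = a then 1 else 0)
  | .jumpTH a :: r => fun b => (if b = a then 1 else 0) + netJump r b

/-- `y` is a refinement of the decorated Gauss diagram with arrow valuations `dA` and circle
valuation `d`: the sum of the markings along each distinguished loop is the corresponding
valuation, and the total sum is the valuation of the circle. -/
def IsRefinement [NeZero (2 * n)] (G : GaussDiagram n) (dA : Fin n → ℤ) (d : ℤ)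
    (y : ZMod (2 * n) → ℤ) : Prop :=
  (∀ a, ∑ e, G.arcChain a e * y e = dA a) ∧ ∑ e, y e = d

/-- The homology class in `H₁(ℝ × S¹) = ℤ` of a loop of the decorated Gauss diagram with arrow
valuations `dA` and circle valuation `d`, computed by expressing the cycle of the loop in the
basis formed by the distinguished loops and the circle. -/
def loopClass [NeZero (2 * n)] (G : GaussDiagram n) (dA : Fin n → ℤ) (d : ℤ)
    (L : Loop G) : ℤ :=
  ∑ a, netJump L.moves a * dA a +
    (G.edgeCount L.start L.moves 0 - ∑ a, netJump L.moves a * G.arcChain a 0) * d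

end GaussDiagram


section Helpers
variable {M : ℕ} [NeZero M]

lemma sum_zmod (g : ZMod M → ℤ) : ∑ x : ZMod M, g x = ∑ j ∈ Finset.range M, g (j : ZMod M) := by
  refine (Finset.sum_nbij (fun j : ℕ => (j : ZMod M)) (fun a _ => Finset.mem_univ _) ?_ ?_ ?_).symm
  · intro a ha b hb hab
    simp only [Finset.coe_range, Set.mem_Iio] at ha hb
    have := congrArg ZMod.val hab
    rwa [ZMod.val_cast_of_lt ha, ZMod.val_cast_of_lt hb] at this
  · intro x _
    exact ⟨x.val, by simpa [Finset.mem_range] using ZMod.val_lt x, by simp [ZMod.natCast_val, ZMod.cast_id]⟩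
  · intro a _; rfl

lemma sum_arc (p q : ZMod M) (f : ZMod M → ℤ) :
    ∑ e, (if (e - p).val < (q - p).val then f e else 0)
      = ∑ j ∈ Finset.range (q - p).val, f (p + (j : ℕ)) := by
  set k := (q - p).val with hk
  have h1 : ∑ e, (if (e - p).val < k then f e else 0)
      = ∑ x : ZMod M, (if x.val < k then f (p + x) else 0) := by
    refine (Fintype.sum_equiv (Equiv.addLeft p) _ _ ?_).symm
    intro x; simp [Equiv.coe_addLeft, add_sub_cancel_left]
  rw [h1, sum_zmod]
  have hkM : k ≤ M := le_of_lt (ZMod.val_lt _)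
  rw [← Finset.sum_subset (Finset.range_subset_range.2 hkM)
    (f := fun j : ℕ => if ((j : ZMod M)).val < k then f (p + (j:ℕ)) else 0) ?_]
  · refine Finset.sum_congr rfl fun j hj => ?_
    rw [Finset.mem_range] at hj
    rw [ZMod.val_cast_of_lt (lt_of_lt_of_le hj hkM), if_pos hj]
  · intro x hx hx'
    rw [Finset.mem_range] at hx hx'
    show (if ((x : ZMod M)).val < k then f (p + (x:ℕ)) else 0) = 0
    rw [ZMod.val_cast_of_lt hx, if_neg (by omega)]

lemma cast_val_add (p : ZMod M) (q : ZMod M) : p + ((q - p).val : ZMod M) = q := by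
  rw [ZMod.natCast_val, ZMod.cast_id]; ring

lemma zmod_sub_one_val {x : ZMod M} (hx : x ≠ 0) : (x - 1).val = x.val - 1 := by
  have h1 : 1 ≤ x.val := by
    rcases Nat.eq_zero_or_pos x.val with h | h
    · exact absurd (by rwa [ZMod.val_eq_zero] at h) hx
    · exact h
  have : ((x.val - 1 : ℕ) : ZMod M) = x - 1 := by
    have : ((x.val : ℕ) : ZMod M) = x := by simp [ZMod.natCast_val, ZMod.cast_id]
    rw [Nat.cast_sub h1, this, Nat.cast_one]
  rw [← this, ZMod.val_cast_of_lt (by have := ZMod.val_lt x; omega)]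

lemma const_of_deriv (v : ZMod M → ℤ) (h : ∀ e, v e = v (e - 1)) (e : ZMod M) : v e = v 0 := by
  have key : ∀ j : ℕ, v (j : ZMod M) = v 0 := by
    intro j; induction j with
    | zero => simp
    | succ j ih => rw [← ih]; have := h ((j+1 : ℕ) : ZMod M); push_cast at this ⊢; simpa using this
  have := key e.val; rwa [ZMod.natCast_val, ZMod.cast_id] at this

end Helpers

section Ind
variable {M : ℕ} [NeZero M]

lemma val_neg_one' : ((-1 : ZMod M)).val = M - 1 := by
  have hM : 1 ≤ M := Nat.one_le_iff_ne_zero.2 (NeZero.ne M)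
  have : ((M - 1 : ℕ) : ZMod M) = -1 := by
    have : ((M : ℕ) : ZMod M) = 0 := ZMod.natCast_self M
    rw [Nat.cast_sub hM, this, Nat.cast_one, zero_sub]
  rw [← this, ZMod.val_cast_of_lt (by omega)]

lemma val_inj_iff {x : ZMod M} {q p : ZMod M} : x = q - p ↔ x.val = (q - p).val := by
  constructor
  · rintro rfl; rfl
  · intro h
    have hx : ((x.val : ℕ) : ZMod M) = x := by simp [ZMod.natCast_val, ZMod.cast_id]
    have hy : (((q - p).val : ℕ) : ZMod M) = q - p := by simp [ZMod.natCast_val, ZMod.cast_id]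
    rw [← hx, h, hy]

lemma ind_deriv (p q e : ZMod M) :
    (if (e - p).val < (q - p).val then (1:ℤ) else 0)
      - (if (e - 1 - p).val < (q - p).val then 1 else 0)
    = (if e = p then 1 else 0) - (if e = q then 1 else 0) := by
  have hM : 1 ≤ M := Nat.one_le_iff_ne_zero.2 (NeZero.ne M)
  set k := (q - p).val with hkdef
  have hkM : k < M := ZMod.val_lt _
  by_cases hpq : q = p
  · subst hpq
    have hk0 : k = 0 := by rw [hkdef, sub_self, ZMod.val_zero]
    simp [hk0]
  · have hk1 : 1 ≤ k := by
      rcases Nat.eq_zero_or_pos k with h | h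
      · exact absurd (sub_eq_zero.1 (by rwa [ZMod.val_eq_zero] at h)) hpq
      · exact h
    by_cases hep : e = p
    · subst hep
      have h1 : (e - e).val = 0 := by rw [sub_self, ZMod.val_zero]
      have h2 : (e - 1 - e).val = M - 1 := by
        have : e - 1 - e = -1 := by ring
        rw [this, val_neg_one']
      rw [h1, h2, if_pos (by omega), if_neg (by omega), if_pos rfl, if_neg (fun h => hpq h.symm)]
    · have hx0 : e - p ≠ 0 := sub_ne_zero.2 hep
      have hx1 : 1 ≤ (e - p).val := by
        rcases Nat.eq_zero_or_pos (e - p).val with h | h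
        · exact absurd (by rwa [ZMod.val_eq_zero] at h) hx0
        · exact h
      have h2 : (e - 1 - p).val = (e - p).val - 1 := by
        have : e - 1 - p = (e - p) - 1 := by ring
        rw [this, zmod_sub_one_val hx0]
      have heq : (e = q) ↔ (e - p).val = k := by
        rw [hkdef]
        constructor
        · rintro rfl; rfl
        · intro h
          have h' : e - p = q - p := val_inj_iff.2 h
          exact sub_left_inj.mp h'
      rw [h2, if_neg hep]
      by_cases heq2 : e = q
      · rw [if_pos heq2]
        have hv : (e - p).val = k := heq.1 heq2
        rw [if_neg (by omega), if_pos (by omega)]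
      · rw [if_neg heq2]
        have hv : (e - p).val ≠ k := fun h => heq2 (heq.2 h)
        split_ifs <;> omega

end Ind

namespace GaussDiagram
variable {n : ℕ} (G : GaussDiagram n)

lemma arcChain_deriv [NeZero (2*n)] (a : Fin n) (e : ZMod (2*n)) :
    G.arcChain a e - G.arcChain a (e - 1)
      = (if e = G.head a then 1 else 0) - (if e = G.tail a then 1 else 0) :=
  ind_deriv _ _ _

lemma sum_netJump_HT [NeZero (2*n)] (r : List (Move n)) (a : Fin n) (e : ZMod (2*n)) :
    ∑ b, netJump (Move.jumpHT a :: r) b * G.arcChain b e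
      = (∑ b, netJump r b * G.arcChain b e) - G.arcChain a e := by
  simp only [netJump, sub_mul, Finset.sum_sub_distrib, ite_mul, one_mul, zero_mul,
    Finset.sum_ite_eq', Finset.mem_univ, if_true]

lemma sum_netJump_TH [NeZero (2*n)] (r : List (Move n)) (a : Fin n) (e : ZMod (2*n)) :
    ∑ b, netJump (Move.jumpTH a :: r) b * G.arcChain b e
      = G.arcChain a e + ∑ b, netJump r b * G.arcChain b e := by
  simp only [netJump, add_mul, Finset.sum_add_distrib, ite_mul, one_mul, zero_mul,
    Finset.sum_ite_eq', Finset.mem_univ, if_true]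

lemma edgeCount_deriv [NeZero (2*n)] :
    ∀ (ms : List (Move n)) (p : ZMod (2*n)), G.validFrom p ms → ∀ e : ZMod (2*n),
    (G.edgeCount p ms e - ∑ a, netJump ms a * G.arcChain a e)
      - (G.edgeCount p ms (e - 1) - ∑ a, netJump ms a * G.arcChain a (e - 1))
    = (if e = p then 1 else 0) - (if e = G.run p ms then 1 else 0) := by
  intro ms
  induction ms with
  | nil => intro p _ e; simp [edgeCount, netJump, run]; exact (sub_self _).symm
  | cons mv r ih =>
    intro p hv e
    obtain ⟨h1, h2⟩ := hv
    match mv with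
    | Move.circ =>
      have hih := ih (p + 1) h2 e
      have hrw : (if e - 1 = p then (1:ℤ) else 0) = (if e = p + 1 then 1 else 0) := by
        congr 1; rw [eq_iff_iff]; constructor
        · intro h; rw [← h]; ring
        · intro h; rw [h]; ring
      rw [show G.run p (Move.circ :: r) = G.run (p + 1) r from rfl]
      simp only [edgeCount, netJump, run, target] at *
      rw [hrw] at *
      linarith [hih]
    | Move.jumpHT a =>
      have hih := ih (G.tail a) h2 e
      have harc := G.arcChain_deriv a e
      rw [show G.run p (Move.jumpHT a :: r) = G.run (G.tail a) r from rfl]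
      simp only [edgeCount, run, target] at *
      rw [G.sum_netJump_HT r a e, G.sum_netJump_HT r a (e-1), h1]
      linarith [hih, harc]
    | Move.jumpTH a =>
      have hih := ih (G.head a) h2 e
      have harc := G.arcChain_deriv a e
      rw [show G.run p (Move.jumpTH a :: r) = G.run (G.head a) r from rfl]
      simp only [edgeCount, run, target] at *
      rw [G.sum_netJump_TH r a e, G.sum_netJump_TH r a (e-1), h1]
      linarith [hih, harc]

lemma loop_const [NeZero (2*n)] (L : Loop G) (e : ZMod (2*n)) :
    G.edgeCount L.start L.moves e - ∑ a, netJump L.moves a * G.arcChain a e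
      = G.edgeCount L.start L.moves 0 - ∑ a, netJump L.moves a * G.arcChain a 0 := by
  refine const_of_deriv
    (fun x => G.edgeCount L.start L.moves x - ∑ a, netJump L.moves a * G.arcChain a x)
    (fun e => ?_) e
  have h := G.edgeCount_deriv L.moves L.start L.valid e
  rw [L.closed] at h
  simp only [sub_self] at h
  beta_reduce
  linarith [h]

lemma class_eq [NeZero (2*n)] (dA : Fin n → ℤ) (d : ℤ) (y : ZMod (2*n) → ℤ)
    (hy : G.IsRefinement dA d y) (L : Loop G) :
    G.loopClass dA d L = ∑ e, G.edgeCount L.start L.moves e * y e := by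
  set c := G.edgeCount L.start L.moves 0 - ∑ a, netJump L.moves a * G.arcChain a 0 with hc
  have key : ∀ e, G.edgeCount L.start L.moves e
      = (∑ a, netJump L.moves a * G.arcChain a e) + c := by
    intro e; have := G.loop_const L e; rw [← hc] at this; linarith
  symm
  calc ∑ e, G.edgeCount L.start L.moves e * y e
      = ∑ e, ((∑ a, netJump L.moves a * G.arcChain a e) * y e + c * y e) := by
        refine Finset.sum_congr rfl fun e _ => ?_; rw [key e]; ring
    _ = (∑ e, (∑ a, netJump L.moves a * G.arcChain a e) * y e) + ∑ e, c * y e :=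
        Finset.sum_add_distrib
    _ = (∑ a, netJump L.moves a * dA a) + c * d := by
        congr 1
        · simp only [Finset.sum_mul]
          rw [Finset.sum_comm]
          refine Finset.sum_congr rfl fun a _ => ?_
          rw [← hy.1 a, Finset.mul_sum]
          exact Finset.sum_congr rfl fun e _ => by ring
        · rw [← Finset.mul_sum, hy.2]
    _ = G.loopClass dA d L := rfl

lemma edgeCount_nonneg : ∀ (ms : List (Move n)) (p e : ZMod (2*n)), 0 ≤ G.edgeCount p ms e := by
  intro ms
  induction ms with
  | nil => intro p e; simp [edgeCount]
  | cons mv r ih =>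
    intro p e
    match mv with
    | Move.circ =>
      simp only [edgeCount]
      have := ih (p+1) e
      positivity
    | Move.jumpHT a => exact ih (G.tail a) e
    | Move.jumpTH a => exact ih (G.head a) e

end GaussDiagram

namespace GaussDiagram
variable {n : ℕ} (G : GaussDiagram n) [NeZero (2*n)]

lemma ep_bijective : Function.Bijective (Sum.elim G.head G.tail) := by
  rw [Fintype.bijective_iff_injective_and_card]
  refine ⟨G.inj, ?_⟩
  simp [ZMod.card]; ring

noncomputable def epEquiv : (Fin n ⊕ Fin n) ≃ ZMod (2*n) :=
  Equiv.ofBijective _ G.ep_bijective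

noncomputable def S0 (dA : Fin n → ℤ) (d : ℤ) : ZMod (2*n) → ℤ := fun p =>
  Sum.elim (fun _ => 0) (fun a => dA a - d * G.arcChain a (-1)) (G.epEquiv.symm p)

lemma S0_head (dA : Fin n → ℤ) (d : ℤ) (a : Fin n) : G.S0 dA d (G.head a) = 0 := by
  have : G.epEquiv.symm (G.head a) = Sum.inl a := by
    rw [Equiv.symm_apply_eq]; rfl
  simp [S0, this]

lemma S0_tail (dA : Fin n → ℤ) (d : ℤ) (a : Fin n) :
    G.S0 dA d (G.tail a) = dA a - d * G.arcChain a (-1) := by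
  have : G.epEquiv.symm (G.tail a) = Sum.inr a := by
    rw [Equiv.symm_apply_eq]; rfl
  simp [S0, this]

noncomputable def y0 (dA : Fin n → ℤ) (d : ℤ) : ZMod (2*n) → ℤ := fun e =>
  (G.S0 dA d (e+1) - G.S0 dA d e) + (if e = -1 then d else 0)

lemma sum_arcChain_mul (a : Fin n) (f : ZMod (2*n) → ℤ) :
    ∑ e, G.arcChain a e * f e
      = ∑ j ∈ Finset.range ((G.tail a - G.head a).val), f (G.head a + (j:ℕ)) := by
  rw [← sum_arc (G.head a) (G.tail a) f]
  refine Finset.sum_congr rfl fun e _ => ?_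
  simp only [arcChain]
  split_ifs <;> simp

lemma sum_range_shift (g : ZMod (2*n) → ℤ) (p : ZMod (2*n)) (k : ℕ) :
    ∑ j ∈ Finset.range k, (g (p + (j:ℕ) + 1) - g (p + (j:ℕ))) = g (p + (k:ℕ)) - g p := by
  have h := Finset.sum_range_sub (fun j : ℕ => g (p + (j:ℕ))) k
  simp only [Nat.cast_zero, add_zero] at h
  rw [← h]
  refine Finset.sum_congr rfl fun j _ => ?_
  congr 2
  push_cast; ring

lemma sum_telescope_arc (g : ZMod (2*n) → ℤ) (a : Fin n) :
    ∑ e, G.arcChain a e * (g (e+1) - g e) = g (G.tail a) - g (G.head a) := by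
  rw [G.sum_arcChain_mul a (fun e => g (e+1) - g e), sum_range_shift, cast_val_add]

lemma sum_circ_zero (g : ZMod (2*n) → ℤ) : ∑ e, (g (e+1) - g e) = 0 := by
  rw [Finset.sum_sub_distrib]
  have : ∑ e : ZMod (2*n), g (e + 1) = ∑ e : ZMod (2*n), g e :=
    Fintype.sum_equiv (Equiv.addRight 1) _ _ (fun x => rfl)
  rw [this, sub_self]

lemma sum_arc_indic (a : Fin n) (c : ℤ) :
    ∑ e, G.arcChain a e * (if e = -1 then c else 0) = G.arcChain a (-1) * c := by
  have : ∀ e : ZMod (2*n), G.arcChain a e * (if e = -1 then c else 0)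
      = if e = -1 then G.arcChain a (-1) * c else 0 := by
    intro e; split_ifs with h
    · rw [h]
    · ring
  simp only [this]
  rw [Finset.sum_ite_eq' Finset.univ (-1 : ZMod (2*n)) (fun _ => G.arcChain a (-1) * c)]
  simp

lemma y0_refines (dA : Fin n → ℤ) (d : ℤ) : G.IsRefinement dA d (G.y0 dA d) := by
  constructor
  · intro a
    have h1 : ∑ e, G.arcChain a e * G.y0 dA d e
        = ∑ e, G.arcChain a e * (G.S0 dA d (e+1) - G.S0 dA d e)
          + ∑ e, G.arcChain a e * (if e = -1 then d else 0) := by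
      rw [← Finset.sum_add_distrib]
      refine Finset.sum_congr rfl fun e _ => by simp only [y0]; ring
    rw [h1, G.sum_telescope_arc, G.sum_arc_indic, G.S0_head, G.S0_tail]
    ring
  · have h1 : ∑ e, G.y0 dA d e
        = ∑ e, (G.S0 dA d (e+1) - G.S0 dA d e) + ∑ e : ZMod (2*n), (if e = -1 then d else 0) :=
      Finset.sum_add_distrib
    rw [h1, sum_circ_zero]
    rw [Finset.sum_ite_eq' Finset.univ (-1 : ZMod (2*n)) (fun _ => d)]
    simp

end GaussDiagram

instance Move.finite {n : ℕ} : Finite (Move n) := by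
  apply Finite.of_injective (fun m : Move n => match m with
    | .circ => (none : Option (Fin n ⊕ Fin n))
    | .jumpHT a => some (Sum.inl a)
    | .jumpTH a => some (Sum.inr a))
  intro m₁ m₂ h
  rcases m₁ with _|a|a <;> rcases m₂ with _|b|b <;> simp_all

namespace GaussDiagram
variable {n : ℕ} (G : GaussDiagram n)

/-- weight of a walk -/
def wt (y : ZMod (2*n) → ℤ) : ZMod (2*n) → List (Move n) → ℤ
  | _, [] => 0
  | p, mv :: r => (match mv with | .circ => y p | _ => 0) + wt y (G.target p mv) r

lemma wt_cons_jump (y : ZMod (2*n) → ℤ) (p : ZMod (2*n)) {mv : Move n} (h : mv.isJump)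
    (r : List (Move n)) : G.wt y p (mv :: r) = G.wt y (G.target p mv) r := by
  rcases mv with _|a|a
  · exact h.elim
  · simp [wt]
  · simp [wt]

lemma run_append (s t : List (Move n)) : ∀ p, G.run p (s ++ t) = G.run (G.run p s) t := by
  induction s with
  | nil => intro p; rfl
  | cons mv r ih => intro p; simp only [List.cons_append, run]; exact ih _

lemma valid_append (s t : List (Move n)) :
    ∀ p, G.validFrom p (s ++ t) ↔ G.validFrom p s ∧ G.validFrom (G.run p s) t := by
  induction s with
  | nil => intro p; simp [validFrom, run]
  | cons mv r ih =>
    intro p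
    simp only [List.cons_append, validFrom, run, List.append_eq]
    rw [ih, and_assoc]

lemma wt_append (y : ZMod (2*n) → ℤ) (s t : List (Move n)) :
    ∀ p, G.wt y p (s ++ t) = G.wt y p s + G.wt y (G.run p s) t := by
  induction s with
  | nil => intro p; simp [wt, run]
  | cons mv r ih =>
    intro p
    simp only [List.cons_append, wt, run, List.append_eq]
    rw [ih]
    ring

lemma wt_eq_sum [NeZero (2*n)] (y : ZMod (2*n) → ℤ) :
    ∀ (ms : List (Move n)) (p), G.wt y p ms = ∑ e, G.edgeCount p ms e * y e := by
  intro ms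
  induction ms with
  | nil => intro p; simp [wt, edgeCount]
  | cons mv r ih =>
    intro p
    rcases mv with _|a|a
    · simp only [wt, target, edgeCount, add_mul, Finset.sum_add_distrib, ite_mul, one_mul,
        zero_mul, Finset.sum_ite_eq', Finset.mem_univ, if_true, ih]
    · simp only [wt, target, edgeCount, ih, zero_add]
    · simp only [wt, target, edgeCount, ih, zero_add]

lemma jump_cancel {m₁ m₂ : Move n} (h₁ : m₁.isJump) (h₂ : m₂.isJump) {x : ZMod (2*n)}
    {r₁ r₂ : List (Move n)}
    (hv : G.validFrom x (m₁ :: r₁)) (hv' : G.validFrom (G.target x m₁) (m₂ :: r₂)) :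
    G.target (G.target x m₁) m₂ = x := by
  obtain ⟨c₁, -⟩ := hv
  obtain ⟨c₂, -⟩ := hv'
  rcases m₁ with _|a|a
  · exact h₁.elim
  · rcases m₂ with _|b|b
    · exact h₂.elim
    · exfalso
      have : (Sum.elim G.head G.tail) (Sum.inr a) = (Sum.elim G.head G.tail) (Sum.inl b) := c₂
      have := G.inj this
      simp at this
    · have : (Sum.elim G.head G.tail) (Sum.inr a) = (Sum.elim G.head G.tail) (Sum.inr b) := c₂
      have hab := G.inj this
      simp only [Sum.inr.injEq] at hab
      subst hab
      have c₁' : x = G.head a := c₁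
      rw [c₁']; rfl
  · rcases m₂ with _|b|b
    · exact h₂.elim
    · have : (Sum.elim G.head G.tail) (Sum.inl a) = (Sum.elim G.head G.tail) (Sum.inl b) := c₂
      have hab := G.inj this
      simp only [Sum.inl.injEq] at hab
      subst hab
      have c₁' : x = G.tail a := c₁
      rw [c₁']; rfl
    · exfalso
      have : (Sum.elim G.head G.tail) (Sum.inl a) = (Sum.elim G.head G.tail) (Sum.inr b) := c₂
      have := G.inj this
      simp at this

end GaussDiagram

namespace GaussDiagram
variable {n : ℕ} (G : GaussDiagram n)

lemma run_single (p : ZMod (2*n)) (mv : Move n) : G.run p [mv] = G.target p mv := rfl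

lemma closed_nonneg (y : ZMod (2*n) → ℤ)
    (HR : ∀ L : Loop G, L.Reduced → 0 ≤ G.wt y L.start L.moves) :
    ∀ (N : ℕ) (cw : List (Move n)) (q : ZMod (2*n)), cw.length ≤ N →
      G.validFrom q cw → G.run q cw = q → 0 ≤ G.wt y q cw := by
  intro N
  induction N with
  | zero =>
    intro cw q hlen hv hc
    rw [List.length_eq_zero_iff.1 (Nat.le_zero.1 hlen)]
    exact le_refl 0
  | succ N ih =>
    intro cw q hlen hv hc
    rcases eq_or_ne cw [] with rfl | hne
    · exact le_refl 0
    by_cases hchain : cw.Chain' (fun m₁ m₂ => ¬(m₁.isJump ∧ m₂.isJump))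
    · by_cases hwrap : ∀ m₁ ∈ cw.getLast?, ∀ m₂ ∈ cw.head?, ¬(m₁.isJump ∧ m₂.isJump)
      · exact HR ⟨q, cw, hv, hc⟩ ⟨hne, hchain, hwrap⟩
      · -- cyclic cancellation
        push_neg at hwrap
        obtain ⟨m₁, hm₁, m₂, hm₂, hj₁, hj₂⟩ := hwrap
        rcases cw with _ | ⟨mh, rest⟩
        · exact absurd rfl hne
        have hm₂' : mh = m₂ := by simpa using hm₂
        have hj₂' : mh.isJump := by rw [hm₂']; exact hj₂
        obtain ⟨v₂, hvrest⟩ := hv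
        rcases eq_or_ne rest [] with rfl | hrne
        · -- single closed jump: impossible
          exfalso
          have hm₁'' : mh = m₁ := by simpa using hm₁
          subst hm₁''
          have hc' : G.target q mh = q := hc
          rcases mh with _|a|a
          · exact hj₂'
          · have v₂' : q = G.head a := v₂
            have h3 : G.tail a = G.head a := by rw [show G.tail a = q from hc', v₂']
            have := G.inj (show (Sum.elim G.head G.tail) (Sum.inr a)
              = (Sum.elim G.head G.tail) (Sum.inl a) from h3)
            simp at this
          · have v₂' : q = G.tail a := v₂
            have h3 : G.head a = G.tail a := by rw [show G.head a = q from hc', v₂']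
            have := G.inj (show (Sum.elim G.head G.tail) (Sum.inl a)
              = (Sum.elim G.head G.tail) (Sum.inr a) from h3)
            simp at this
        · -- c = m₂ :: (mid ++ [m₁])
          have hm₁' : rest.getLast hrne = m₁ := by
            rw [List.getLast?_eq_getLast (List.cons_ne_nil mh rest)] at hm₁
            have h2 := Option.mem_some_iff.1 hm₁
            rw [← h2]
            exact (List.getLast_cons hrne).symm
          have hrest : rest.dropLast ++ [m₁] = rest := by
            rw [← hm₁']; exact List.dropLast_append_getLast hrne
          have hvrest' : G.validFrom (G.target q mh) (rest.dropLast ++ [m₁]) := by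
            rw [hrest]; exact hvrest
          rw [G.valid_append] at hvrest'
          obtain ⟨hvmid, hv1⟩ := hvrest'
          have htq : G.target (G.run (G.target q mh) rest.dropLast) m₁ = q := by
            have h4 : G.run q (mh :: rest) = q := hc
            have h5 : G.run (G.target q mh) rest = q := h4
            rw [← hrest, G.run_append, G.run_single] at h5
            exact h5
          have hv' : G.validFrom
              (G.target (G.run (G.target q mh) rest.dropLast) m₁) (mh :: rest) := by
            rw [htq]; exact ⟨v₂, hvrest⟩
          have hcancel := G.jump_cancel hj₁ hj₂' hv1 hv'
          rw [htq] at hcancel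
          -- hcancel : G.target q mh = G.run (G.target q mh) rest.dropLast
          have hwt1 : G.wt y q (mh :: rest) = G.wt y (G.target q mh) rest.dropLast := by
            rw [G.wt_cons_jump y q hj₂', ← hrest, G.wt_append,
              G.wt_cons_jump y _ hj₁]
            simp [wt]
          rw [hwt1]
          refine ih rest.dropLast (G.target q mh) ?_ hvmid hcancel.symm
          have := List.length_dropLast (xs := rest)
          have h6 : (mh :: rest).length ≤ N + 1 := hlen
          simp only [List.length_cons] at h6
          omega
    · -- chain' broken
      rw [List.Chain', List.isChain_iff_getElem] at hchain
      push_neg at hchain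
      obtain ⟨i, hi, hbad⟩ := hchain
      have hlt1 : i < cw.length := by omega
      have hlt2 : i + 1 < cw.length := by omega
      have hdec : cw = cw.take i ++ (cw[i]) :: (cw[i + 1]) :: cw.drop (i+2) := by
        conv_lhs => rw [← List.take_append_drop i cw]
        rw [List.drop_eq_getElem_cons hlt1, List.drop_eq_getElem_cons hlt2]
      have hv2 := hv
      rw [hdec, G.valid_append] at hv2
      have hvu := hv2.1
      have hvx : G.validFrom (G.run q (cw.take i)) ((cw[i]) :: (cw[i + 1]) :: cw.drop (i+2)) :=
        hv2.2
      have hvx2 : G.validFrom (G.target (G.run q (cw.take i)) (cw[i]))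
          ((cw[i + 1]) :: cw.drop (i+2)) := hvx.2
      have hvx3 : G.validFrom (G.target (G.target (G.run q (cw.take i)) (cw[i])) (cw[i + 1]))
          (cw.drop (i+2)) := hvx2.2
      have hcancel := G.jump_cancel hbad.1 hbad.2 hvx hvx2
      -- hcancel : target (target x cw[i]) c[i+1] = x
      have hrun : G.run q (cw.take i ++ cw.drop (i+2)) = q := by
        rw [G.run_append]
        have h4 := hc
        rw [hdec, G.run_append] at h4
        have h5 : G.run (G.run q (cw.take i)) ((cw[i]) :: (cw[i + 1]) :: cw.drop (i+2))
            = G.run (G.target (G.target (G.run q (cw.take i)) (cw[i])) (cw[i + 1])) (cw.drop (i+2)) := rfl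
        rw [h5, hcancel] at h4
        exact h4
      have hvalid : G.validFrom q (cw.take i ++ cw.drop (i+2)) := by
        rw [G.valid_append]
        refine ⟨hvu, ?_⟩
        rw [← hcancel]
        exact hvx3
      have hwt : G.wt y q cw = G.wt y q (cw.take i ++ cw.drop (i+2)) := by
        conv_lhs => rw [hdec]
        rw [G.wt_append, G.wt_append,
          G.wt_cons_jump y _ hbad.1, G.wt_cons_jump y _ hbad.2, hcancel]
      rw [hwt]
      refine ih _ q ?_ hvalid hrun
      have h7 := @List.length_take _ i cw
      have h8 := @List.length_drop _ (i+2) cw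
      have h9 : cw.length ≤ N + 1 := hlen
      simp only [List.length_append]
      omega

end GaussDiagram

namespace GaussDiagram
variable {n : ℕ} (G : GaussDiagram n)

lemma exists_short [NeZero (2*n)] (y : ZMod (2*n) → ℤ)
    (HW : ∀ (c : List (Move n)) (q), G.validFrom q c → G.run q c = q → 0 ≤ G.wt y q c) :
    ∀ (N : ℕ) (ms : List (Move n)) (p : ZMod (2*n)), ms.length ≤ N → G.validFrom p ms →
      ∃ ms', G.validFrom p ms' ∧ G.run p ms' = G.run p ms ∧
        G.wt y p ms' ≤ G.wt y p ms ∧ ms'.length < 2*n := by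
  have h2n : 0 < 2*n := Nat.pos_of_ne_zero (NeZero.ne (2*n))
  intro N
  induction N with
  | zero =>
    intro ms p hlen hv
    rw [List.length_eq_zero_iff.1 (Nat.le_zero.1 hlen)]
    exact ⟨[], trivial, rfl, le_refl _, by simpa using h2n⟩
  | succ N ih =>
    intro ms p hlen hv
    by_cases hsh : ms.length < 2*n
    · exact ⟨ms, hv, rfl, le_refl _, hsh⟩
    push_neg at hsh
    have hcard : Fintype.card (ZMod (2*n)) < Fintype.card (Fin (ms.length + 1)) := by
      rw [ZMod.card, Fintype.card_fin]; omega
    obtain ⟨i, j, hij, hfeq⟩ := Fintype.exists_ne_map_eq_of_card_lt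
      (fun i : Fin (ms.length + 1) => G.run p (ms.take i)) hcard
    suffices hmain : ∀ i j : ℕ, i < j → j ≤ ms.length →
        G.run p (ms.take i) = G.run p (ms.take j) →
        ∃ ms', G.validFrom p ms' ∧ G.run p ms' = G.run p ms ∧
          G.wt y p ms' ≤ G.wt y p ms ∧ ms'.length < 2*n by
      rcases lt_trichotomy (i : ℕ) (j : ℕ) with h | h | h
      · exact hmain i j h (by omega) hfeq
      · exact absurd (Fin.ext h) hij
      · exact hmain j i h (by omega) hfeq.symm
    intro i j hij hjlen hfeq2
    set u := ms.take i with hu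
    set c := (ms.take j).drop i with hcdef
    set v := ms.drop j with hvdef
    have huc : u ++ c = ms.take j := by
      rw [hu, hcdef]
      conv_rhs => rw [← List.take_append_drop i (ms.take j)]
      congr 1
      rw [List.take_take, min_eq_left (le_of_lt hij)]
    have hdec : ms = (u ++ c) ++ v := by rw [huc, hvdef, List.take_append_drop]
    have hclen : c.length = j - i := by
      rw [hcdef, List.length_drop, List.length_take, min_eq_left hjlen]
    have hv2 := hv
    rw [hdec, G.valid_append, G.valid_append] at hv2
    obtain ⟨⟨hvu, hvc⟩, hvv⟩ := hv2
    have hrv : G.run (G.run p u) c = G.run p u := by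
      have : G.run p (u ++ c) = G.run p (ms.take j) := by rw [huc]
      rw [G.run_append] at this
      rw [this, ← hfeq2]
    have hwtc : 0 ≤ G.wt y (G.run p u) c := HW c _ hvc hrv
    have hrun2 : G.run p (u ++ v) = G.run p ms := by
      rw [G.run_append, hdec, G.run_append, G.run_append, hrv]
    have hvalid2 : G.validFrom p (u ++ v) := by
      rw [G.valid_append]
      refine ⟨hvu, ?_⟩
      have : G.run p (u ++ c) = G.run p u := by rw [G.run_append, hrv]
      rw [← this]
      exact hvv
    have hwt2 : G.wt y p (u ++ v) ≤ G.wt y p ms := by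
      rw [hdec, G.wt_append, G.wt_append, G.wt_append, G.run_append, hrv]
      linarith
    have hlen2 : (u ++ v).length ≤ N := by
      have h1 : ms.length ≤ N + 1 := hlen
      have h2 : u.length = i := by rw [hu, List.length_take]; omega
      have h3 : v.length = ms.length - j := by rw [hvdef, List.length_drop]
      rw [List.length_append]
      omega
    obtain ⟨ms', h1, h2, h3, h4⟩ := ih (u ++ v) p hlen2 hvalid2
    exact ⟨ms', h1, by rw [h2, hrun2], le_trans h3 hwt2, h4⟩

lemma replicate_circ : ∀ (k : ℕ) (p : ZMod (2*n)),
    G.validFrom p (List.replicate k Move.circ) ∧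
      G.run p (List.replicate k Move.circ) = p + (k : ℕ) := by
  intro k
  induction k with
  | zero => intro p; exact ⟨trivial, by simp [run]⟩
  | succ k ih =>
    intro p
    rw [List.replicate_succ]
    refine ⟨⟨trivial, (ih (p+1)).1⟩, ?_⟩
    have := (ih (p+1)).2
    show G.run (p+1) (List.replicate k Move.circ) = _
    rw [this]
    push_cast
    ring

end GaussDiagram

/-- A decorated Gauss diagram admits a non-negative refinement if and only if it is weakly
admissible: every nontrivial orientation-respecting loop has non-negative homology class. -/
theorem stmt13 (n : ℕ) [NeZero (2 * n)] (G : GaussDiagram n) (dA : Fin n → ℤ) (d : ℤ) :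
    (∃ y, G.IsRefinement dA d y ∧ ∀ e, 0 ≤ y e) ↔
      ∀ L : GaussDiagram.Loop G, L.Reduced → 0 ≤ G.loopClass dA d L := by
  constructor
  · rintro ⟨y, hy, hpos⟩ L _
    rw [G.class_eq dA d y hy L]
    exact Finset.sum_nonneg fun e _ => mul_nonneg (G.edgeCount_nonneg _ _ _) (hpos e)
  · intro H
    set y₀ := G.y0 dA d with hy₀def
    have hr₀ : G.IsRefinement dA d y₀ := G.y0_refines dA d
    have HR : ∀ L : GaussDiagram.Loop G, L.Reduced → 0 ≤ G.wt y₀ L.start L.moves := by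
      intro L hL
      rw [G.wt_eq_sum y₀ L.moves L.start, ← G.class_eq dA d y₀ hr₀ L]
      exact H L hL
    have HW : ∀ (c : List (Move n)) (q), G.validFrom q c → G.run q c = q → 0 ≤ G.wt y₀ q c :=
      fun c q hv hc => G.closed_nonneg y₀ HR c.length c q le_rfl hv hc
    -- the potential
    have key : ∀ p : ZMod (2*n), ∃ m : ℤ,
        (∃ ms, G.validFrom 0 ms ∧ G.run 0 ms = p ∧ G.wt y₀ 0 ms = m) ∧
        (∀ ms, G.validFrom 0 ms → G.run 0 ms = p → m ≤ G.wt y₀ 0 ms) := by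
      intro p
      set Sp : Set ℤ := {w | ∃ ms, G.validFrom 0 ms ∧ G.run 0 ms = p ∧
        ms.length < 2*n ∧ G.wt y₀ 0 ms = w} with hSp
      have hfin : Sp.Finite := by
        refine Set.Finite.subset ((List.finite_length_lt (Move n) (2*n)).image
          (fun ms => G.wt y₀ 0 ms)) ?_
        rintro w ⟨ms, _, _, h3, h4⟩
        exact ⟨ms, h3, h4⟩
      have hne : Sp.Nonempty := by
        obtain ⟨hval, hrun⟩ := G.replicate_circ p.val 0
        refine ⟨G.wt y₀ 0 (List.replicate p.val Move.circ), ⟨_, hval, ?_, ?_, rfl⟩⟩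
        · rw [hrun, zero_add, ZMod.natCast_val, ZMod.cast_id]
        · rw [List.length_replicate]; exact ZMod.val_lt p
      have hne' : hfin.toFinset.Nonempty := by
        rwa [Set.Finite.toFinset_nonempty]
      set m := hfin.toFinset.min' hne' with hm
      have hmem : m ∈ Sp := by
        rw [← Set.Finite.mem_toFinset hfin]
        exact hfin.toFinset.min'_mem hne'
      obtain ⟨ms₀, hv₀, hr₀', _, hw₀⟩ := hmem
      refine ⟨m, ⟨ms₀, hv₀, hr₀', hw₀⟩, ?_⟩
      intro ms hv hr
      obtain ⟨ms', h1, h2, h3, h4⟩ := G.exists_short y₀ HW ms.length ms 0 le_rfl hv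
      have hmem' : G.wt y₀ 0 ms' ∈ Sp := ⟨ms', h1, by rw [h2, hr], h4, rfl⟩
      have := hfin.toFinset.min'_le _ ((Set.Finite.mem_toFinset hfin).2 hmem')
      linarith
    choose φ hmem hlb using key
    have hstep : ∀ e : ZMod (2*n), φ (e+1) ≤ φ e + y₀ e := by
      intro e
      obtain ⟨ms, hv, hr, hw⟩ := hmem e
      have hv' : G.validFrom 0 (ms ++ [Move.circ]) := by
        rw [G.valid_append]
        exact ⟨hv, ⟨trivial, trivial⟩⟩
      have hr' : G.run 0 (ms ++ [Move.circ]) = e + 1 := by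
        rw [G.run_append, hr]; rfl
      have hb := hlb (e+1) _ hv' hr'
      rw [G.wt_append, hr] at hb
      have : G.wt y₀ e [Move.circ] = y₀ e := by simp [GaussDiagram.wt]
      rw [this, hw] at hb
      linarith
    have hHT : ∀ a : Fin n, φ (G.tail a) ≤ φ (G.head a) := by
      intro a
      obtain ⟨ms, hv, hr, hw⟩ := hmem (G.head a)
      have hv' : G.validFrom 0 (ms ++ [Move.jumpHT a]) := by
        rw [G.valid_append, hr]
        exact ⟨hv, ⟨rfl, trivial⟩⟩
      have hr' : G.run 0 (ms ++ [Move.jumpHT a]) = G.tail a := by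
        rw [G.run_append, hr]; rfl
      have hb := hlb (G.tail a) _ hv' hr'
      rw [G.wt_append, hr] at hb
      have : G.wt y₀ (G.head a) [Move.jumpHT a] = 0 := by simp [GaussDiagram.wt]
      rw [this, hw] at hb
      linarith
    have hTH : ∀ a : Fin n, φ (G.head a) ≤ φ (G.tail a) := by
      intro a
      obtain ⟨ms, hv, hr, hw⟩ := hmem (G.tail a)
      have hv' : G.validFrom 0 (ms ++ [Move.jumpTH a]) := by
        rw [G.valid_append, hr]
        exact ⟨hv, ⟨rfl, trivial⟩⟩
      have hr' : G.run 0 (ms ++ [Move.jumpTH a]) = G.head a := by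
        rw [G.run_append, hr]; rfl
      have hb := hlb (G.head a) _ hv' hr'
      rw [G.wt_append, hr] at hb
      have : G.wt y₀ (G.tail a) [Move.jumpTH a] = 0 := by simp [GaussDiagram.wt]
      rw [this, hw] at hb
      linarith
    have hφeq : ∀ a : Fin n, φ (G.tail a) = φ (G.head a) :=
      fun a => le_antisymm (hHT a) (hTH a)
    refine ⟨fun e => y₀ e - (φ (e+1) - φ e), ⟨?_, ?_⟩, ?_⟩
    · intro a
      have hsplit : ∑ e, G.arcChain a e * (y₀ e - (φ (e+1) - φ e))
          = (∑ e, G.arcChain a e * y₀ e) - ∑ e, G.arcChain a e * (φ (e+1) - φ e) := by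
        rw [← Finset.sum_sub_distrib]
        exact Finset.sum_congr rfl fun e _ => by ring
      rw [hsplit, G.sum_telescope_arc φ a, hr₀.1 a, hφeq a]
      ring
    · have hsplit : ∑ e, (y₀ e - (φ (e+1) - φ e))
          = (∑ e, y₀ e) - ∑ e, (φ (e+1) - φ e) := Finset.sum_sub_distrib _ _
      rw [hsplit, GaussDiagram.sum_circ_zero φ, hr₀.2]
      ring
    · intro e
      have := hstep e
      show 0 ≤ y₀ e - (φ (e+1) - φ e)
      linarith
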